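/- The sum of the two gradients at θ_E = 1 with k = 1/2 is nonzero: since the BC score expectation vanishes at the expert parameter and d/dθ log p_θ(s₂)|_{θ=1} < 0, the EDM objective gradient at the expert parameter is nonzero. -/

import Mathlib

open Real

lemma aux_ne : (1 / 2) * Real.exp (1 / 2) / (1 + Real.exp (1 / 2))
      - (Real.exp 1 + (1 / 2) * Real.exp (1 / 2)) / (2 + Real.exp 1 + Real.exp (1 / 2)) ≠ 0 := by
  have h1 : (0:ℝ) < Real.exp (1/2) := Real.exp_pos _
  have h2 : (0:ℝ) < Real.exp 1 := Real.exp_pos _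
  have hmul : Real.exp (1/2) * Real.exp (1/2) = Real.exp 1 := by
    rw [← Real.exp_add]; norm_num
  have hA : (0:ℝ) < 1 + Real.exp (1/2) := by linarith
  have hB : (0:ℝ) < 2 + Real.exp 1 + Real.exp (1/2) := by linarith
  have : (1 / 2) * Real.exp (1 / 2) / (1 + Real.exp (1 / 2))
      - (Real.exp 1 + (1 / 2) * Real.exp (1 / 2)) / (2 + Real.exp 1 + Real.exp (1 / 2)) < 0 := by
    rw [div_sub_div _ _ (ne_of_gt hA) (ne_of_gt hB), div_neg_iff]
    right
    have h3 : (1:ℝ) + 1/2 ≤ Real.exp (1/2) := by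
      have := Real.add_one_le_exp ((1:ℝ)/2); linarith
    constructor
    · nlinarith [mul_pos h1 h2]
    · positivity
  linarith

theorem stmt_17 :
    (0 : ℝ) + deriv (fun t : ℝ =>
        Real.log ((1 + Real.exp (t / 2)) / (2 + Real.exp t + Real.exp (t / 2)))) 1 ≠ 0 ∧
    (1 / 2) * Real.exp (1 / 2) / (1 + Real.exp (1 / 2))
      - (Real.exp 1 + (1 / 2) * Real.exp (1 / 2)) / (2 + Real.exp 1 + Real.exp (1 / 2)) ≠ 0 := by
  have h1 : (0:ℝ) < Real.exp (1/2) := Real.exp_pos _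
  have h2 : (0:ℝ) < Real.exp 1 := Real.exp_pos _
  have hA : (0:ℝ) < 1 + Real.exp (1/2) := by linarith
  have hB : (0:ℝ) < 2 + Real.exp 1 + Real.exp (1/2) := by linarith
  have hexp : HasDerivAt (fun t : ℝ => Real.exp (t / 2)) (Real.exp (1/2) * (1/2)) 1 := by
    have := (Real.hasDerivAt_exp ((1:ℝ)/2)).comp 1 ((hasDerivAt_id (1:ℝ)).div_const 2)
    simpa [Function.comp_def] using this
  have hAd : HasDerivAt (fun t : ℝ => 1 + Real.exp (t / 2)) (Real.exp (1/2) * (1/2)) 1 :=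
    hexp.const_add 1
  have hBd : HasDerivAt (fun t : ℝ => 2 + Real.exp t + Real.exp (t / 2))
      (Real.exp 1 + Real.exp (1/2) * (1/2)) 1 :=
    ((Real.hasDerivAt_exp 1).const_add 2).add hexp
  have hfun : (fun t : ℝ => Real.log ((1 + Real.exp (t / 2)) / (2 + Real.exp t + Real.exp (t / 2))))
      = fun t : ℝ => Real.log (1 + Real.exp (t / 2)) - Real.log (2 + Real.exp t + Real.exp (t / 2)) := by
    funext t
    have hAt : (0:ℝ) < 1 + Real.exp (t/2) := by positivity
    have hBt : (0:ℝ) < 2 + Real.exp t + Real.exp (t/2) := by positivity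
    rw [Real.log_div (ne_of_gt hAt) (ne_of_gt hBt)]
  have hd : HasDerivAt (fun t : ℝ => Real.log (1 + Real.exp (t / 2)) - Real.log (2 + Real.exp t + Real.exp (t / 2)))
      (Real.exp (1/2) * (1/2) / (1 + Real.exp (1/2))
        - (Real.exp 1 + Real.exp (1/2) * (1/2)) / (2 + Real.exp 1 + Real.exp (1/2))) 1 := by
    have hlA := hAd.log (ne_of_gt hA)
    have hlB := hBd.log (ne_of_gt hB)
    simpa [Pi.sub_def] using hlA.sub hlB
  constructor
  · rw [hfun, hd.deriv, zero_add]
    intro h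
    exact aux_ne (by linear_combination h)
  · exact aux_ne
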